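/- Let γ ∈ (0,1), R a finite set of reals, and M = {γⁿ·r | n ∈ ℕ, r ∈ R} ∪ {0}. Let f : ℝ → ℝ be any function with f(0) = 0 and f(h) ∈ M for all h. Then f has no nonzero derivative at 0; i.e., if f is differentiable at 0 then f'(0) = 0. -/

import Mathlib

open Filter Real Topology

theorem no_nonzero_deriv (γ : ℝ) (hγ : γ ∈ Set.Ioo (0:ℝ) 1) (R : Finset ℝ)
    (M : Set ℝ) (hM : M = {x : ℝ | ∃ n : ℕ, ∃ r ∈ R, x = γ ^ n * r} ∪ {0})
    (f : ℝ → ℝ) (hf0 : f 0 = 0) (hf : ∀ h : ℝ, f h ∈ M)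
    (l : ℝ) (hl : HasDerivAt f l 0) : l = 0 := by
  obtain ⟨hγ0, hγ1⟩ := hγ
  by_contra hl0
  have habsl : 0 < |l| := abs_pos.mpr hl0
  set T : Set ℝ := ⋃ r ∈ (R : Set ℝ), Set.range (fun z : ℤ => γ ^ z * r) with hTdef
  have key : ∀ h : ℝ, 0 < h → l * h ∈ T := by
    intro h hh
    -- the sequence x k = γ^k * h tends to 0 within {x | x ≠ 0}
    have hxpos : ∀ k : ℕ, 0 < γ ^ k * h := fun k => mul_pos (pow_pos hγ0 k) hh
    have hx0 : Tendsto (fun k : ℕ => γ ^ k * h) atTop (𝓝[≠] 0) := by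
      refine tendsto_nhdsWithin_of_tendsto_nhds_of_eventually_within _ ?_ ?_
      · have := (tendsto_pow_atTop_nhds_zero_of_lt_one hγ0.le hγ1).mul_const h
        simpa using this
      · exact Eventually.of_forall fun k => (hxpos k).ne'
    rw [hasDerivAt_iff_tendsto_slope] at hl
    have hc : Tendsto (fun k : ℕ => f (γ ^ k * h) / (γ ^ k * h)) atTop (𝓝 l) := by
      have h2 := hl.comp hx0
      refine h2.congr fun k => ?_
      simp [Function.comp, slope_def_field, hf0]
    set c : ℕ → ℝ := fun k => f (γ ^ k * h) / (γ ^ k * h) with hcdef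
    have hev : ∀ᶠ k in atTop, |c k - l| < |l| / 2 := by
      have := Metric.tendsto_nhds.mp hc (|l| / 2) (by positivity)
      simpa [Real.dist_eq] using this
    -- basic consequences for such k
    have habs : ∀ k, |c k - l| < |l| / 2 → |l| / 2 < |c k| ∧ |c k| < 3 * |l| / 2 := by
      intro k hk
      constructor
      · have h1 : |l| - |c k| ≤ |l - c k| := abs_sub_abs_le_abs_sub l (c k)
        rw [abs_sub_comm] at h1
        linarith
      · have h2 : |c k| - |l| ≤ |c k - l| := abs_sub_abs_le_abs_sub (c k) l
        linarith
    -- extract the decomposition f (γ^k h) = γ^n * r with r ∈ R, r ≠ 0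
    have hdec : ∀ k, |c k - l| < |l| / 2 →
        ∃ n : ℕ, ∃ r ∈ R, r ≠ 0 ∧ f (γ ^ k * h) = γ ^ n * r := by
      intro k hk
      have hcne : c k ≠ 0 := by
        have := (habs k hk).1
        intro h0; rw [h0] at this; simp at this; linarith
      have hfne : f (γ ^ k * h) ≠ 0 := by
        intro h0
        apply hcne
        simp [hcdef, h0]
      have := hf (γ ^ k * h)
      rw [hM] at this
      rcases this with hmem | hmem
      · obtain ⟨n, r, hr, heq⟩ := hmem
        refine ⟨n, r, hr, ?_, heq⟩
        intro h0; rw [h0, mul_zero] at heq; exact hfne heq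
      · exact absurd hmem hfne
    -- R has a nonzero element
    obtain ⟨k₀, hk₀⟩ := hev.exists
    obtain ⟨n₀, r₀, hr₀R, hr₀0, _⟩ := hdec k₀ hk₀
    set R' : Finset ℝ := R.filter (fun r => r ≠ 0) with hR'def
    have hne' : R'.Nonempty := ⟨r₀, Finset.mem_filter.mpr ⟨hr₀R, hr₀0⟩⟩
    set A : ℝ := R'.sup' hne' (fun r => |r|) with hAdef
    set ρ : ℝ := R'.inf' hne' (fun r => |r|) with hρdef
    have hρpos : 0 < ρ := by
      rw [hρdef, Finset.lt_inf'_iff]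
      intro r hr
      exact abs_pos.mpr (Finset.mem_filter.mp hr).2
    have hApos : 0 < A := by
      obtain ⟨r₁, hr₁⟩ := hne'
      exact lt_of_lt_of_le hρpos ((Finset.inf'_le _ hr₁).trans (Finset.le_sup' _ hr₁))
    set a : ℝ := |l| * h / (2 * A) with hadef
    set b : ℝ := 3 * |l| * h / (2 * ρ) with hbdef
    have hapos : 0 < a := by positivity
    have hbpos : 0 < b := by positivity
    have hlogγ : Real.log γ < 0 := Real.log_neg hγ0 hγ1
    set Z₁ : ℤ := ⌈Real.log b / Real.log γ⌉ with hZ₁def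
    set Z₀ : ℤ := ⌊Real.log a / Real.log γ⌋ with hZ₀def
    set F : Finset (ℤ × ℝ) := Finset.Icc Z₁ Z₀ ×ˢ R' with hFdef
    have hevF : ∀ᶠ k in atTop, ∃ p ∈ F, c k = γ ^ p.1 * p.2 / h := by
      refine hev.mono fun k hk => ?_
      obtain ⟨n, r, hrR, hr0, heq⟩ := hdec k hk
      have hr' : r ∈ R' := Finset.mem_filter.mpr ⟨hrR, hr0⟩
      set z : ℤ := (n : ℤ) - (k : ℤ) with hzdef
      have hγne : γ ≠ 0 := hγ0.ne'
      have hzval : γ ^ z = γ ^ n / γ ^ k := by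
        rw [hzdef, zpow_sub₀ hγne, zpow_natCast, zpow_natCast]
      have hck : c k = γ ^ z * r / h := by
        show f (γ ^ k * h) / (γ ^ k * h) = γ ^ z * r / h
        rw [heq, hzval]
        field_simp
      have hzpos : (0:ℝ) < γ ^ z := zpow_pos hγ0 z
      have hcabs : |c k| = γ ^ z * |r| / h := by
        rw [hck, abs_div, abs_mul, abs_of_pos hzpos, abs_of_pos hh]
      have hrA : |r| ≤ A := Finset.le_sup' _ hr'
      have hrρ : ρ ≤ |r| := Finset.inf'_le _ hr'
      obtain ⟨hlo, hhi⟩ := habs k hk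
      rw [hcabs] at hlo hhi
      -- a < γ^z < b
      have hga : a < γ ^ z := by
        rw [lt_div_iff₀ hh] at hlo
        show |l| * h / (2 * A) < γ ^ z
        rw [div_lt_iff₀ (by positivity : (0:ℝ) < 2 * A)]
        nlinarith [mul_le_mul_of_nonneg_left hrA hzpos.le]
      have hgb : γ ^ z < b := by
        rw [div_lt_iff₀ hh] at hhi
        show γ ^ z < 3 * |l| * h / (2 * ρ)
        rw [lt_div_iff₀ (by positivity : (0:ℝ) < 2 * ρ)]
        nlinarith [mul_le_mul_of_nonneg_left hrρ hzpos.le]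
      -- z bounds
      have hzle : z ≤ Z₀ := by
        rw [hZ₀def, Int.le_floor]
        have h1 : Real.log a < z * Real.log γ := by
          rw [← Real.log_zpow]
          exact Real.log_lt_log hapos hga
        rw [le_div_iff_of_neg hlogγ]
        linarith
      have hzge : Z₁ ≤ z := by
        rw [hZ₁def, Int.ceil_le]
        have h1 : z * Real.log γ < Real.log b := by
          rw [← Real.log_zpow]
          exact Real.log_lt_log hzpos hgb
        rw [div_le_iff_of_neg hlogγ]
        linarith
      exact ⟨(z, r), Finset.mem_product.mpr ⟨Finset.mem_Icc.mpr ⟨hzge, hzle⟩, hr'⟩, hck⟩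
    -- pigeonhole: some pair occurs frequently
    have hfreq : ∃ p ∈ F, ∃ᶠ k in atTop, c k = γ ^ p.1 * p.2 / h := by
      by_contra hcon
      push_neg at hcon
      have hall : ∀ᶠ k in atTop, ∀ p ∈ F, ¬ (c k = γ ^ p.1 * p.2 / h) := by
        rw [Filter.eventually_all_finset]
        intro p hp
        exact hcon p hp
      obtain ⟨k, hk1, hk2⟩ := (hevF.and hall).exists
      obtain ⟨p, hp, hpe⟩ := hk1
      exact hk2 p hp hpe
    obtain ⟨⟨z, r⟩, hpF, hfr⟩ := hfreq
    have hlval : l = γ ^ z * r / h :=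
      tendsto_nhds_unique_of_frequently_eq hc tendsto_const_nhds hfr
    have hrR : r ∈ R := (Finset.mem_filter.mp (Finset.mem_product.mp hpF).2).1
    refine Set.mem_biUnion hrR ⟨z, ?_⟩
    rw [hlval]
    field_simp
  -- T is countable, but contains l * h for all h > 0 — contradiction
  have hTc : T.Countable :=
    Set.Countable.biUnion R.countable_toSet fun r _ => Set.countable_range _
  have hsub : Set.Ioi (0:ℝ) ⊆ (fun h => l * h) ⁻¹' T := fun h hh => key h hh
  have hcnt : (Set.Ioi (0:ℝ)).Countable :=
    (hTc.preimage (mul_right_injective₀ hl0)).mono hsub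
  have hzero := hcnt.measure_zero MeasureTheory.volume
  rw [Real.volume_Ioi] at hzero
  exact ENNReal.top_ne_zero hzero
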